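/- Let a : ℕ → ℚ satisfy a(0)=1, a(1)=-1, a(2)=A with A ≤ 0, and a(n) = -(1/2)·∑_{k=0}^{n-1} a(k)·C(n,k)·2^{n-k} for n ≥ 3. Define c(j,d) = ∑_{k=j}^{d} 2^{-k}·C(d-j,d-k)·a(k). Then for every m ≥ 1: c(j,4m) ≥ 0 for all 0 ≤ j ≤ 4m, and c(j,4m+2) ≤ 0 for all 0 ≤ j ≤ 4m+2. -/

import Mathlib

open Finset

lemma reflectGen (u : ℕ → ℚ) (N p q : ℕ) (hq : q ≤ N + 1) :
    ∑ i ∈ Finset.Ico p q, u (N - i) = ∑ i ∈ Finset.Ico (N + 1 - q) (N + 1 - p), u i := by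
  refine Finset.sum_nbij' (fun i => N - i) (fun i => N - i) ?_ ?_ ?_ ?_ ?_ <;>
    intro x hx <;> simp only [Finset.mem_Ico] at * <;> first | omega | (congr 1; omega)

lemma pascalc (a : ℕ → ℚ) (c : ℕ → ℕ → ℚ)
    (hc : ∀ j d, c j d = ∑ k ∈ Finset.Icc j d,
      ((d - j).choose (d - k) : ℚ) * a k / 2 ^ k)
    (j e : ℕ) (h : j ≤ e) : c j (e+1) = c (j+1) (e+1) + c j e := by
  have h1 : c j (e+1) = ∑ k ∈ Finset.Icc j e, ((e + 1 - j).choose (e + 1 - k) : ℚ) * a k / 2 ^ k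
      + a (e+1) / 2 ^ (e+1) := by
    rw [hc, Finset.sum_Icc_succ_top (by omega)]
    simp
  have h2 : ∀ k ∈ Finset.Icc j e, ((e + 1 - j).choose (e + 1 - k) : ℚ) * a k / 2 ^ k
      = ((e - j).choose (e - k) : ℚ) * a k / 2 ^ k + ((e - j).choose (e + 1 - k) : ℚ) * a k / 2 ^ k := by
    intro k hk
    simp only [Finset.mem_Icc] at hk
    have e1 : e + 1 - j = (e - j) + 1 := by omega
    have e2 : e + 1 - k = (e - k) + 1 := by omega
    rw [e1, e2, Nat.choose_succ_succ]
    push_cast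
    ring
  rw [Finset.sum_congr rfl h2, Finset.sum_add_distrib] at h1
  have h3 : ∑ k ∈ Finset.Icc j e, ((e - j).choose (e + 1 - k) : ℚ) * a k / 2 ^ k
      = ∑ k ∈ Finset.Icc (j+1) e, ((e - j).choose (e + 1 - k) : ℚ) * a k / 2 ^ k := by
    have : Finset.Icc j e = insert j (Finset.Icc (j+1) e) := by
      ext x; simp only [Finset.mem_insert, Finset.mem_Icc]; omega
    rw [this, Finset.sum_insert (by simp)]
    rw [Nat.choose_eq_zero_of_lt (by omega)]
    simp
  have h4 : c (j+1) (e+1) = ∑ k ∈ Finset.Icc (j+1) e, ((e - j).choose (e + 1 - k) : ℚ) * a k / 2 ^ k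
      + a (e+1) / 2 ^ (e+1) := by
    rw [hc, Finset.sum_Icc_succ_top (by omega)]
    have : e + 1 - (j + 1) = e - j := by omega
    rw [this]
    simp
  rw [h1, h3, h4, hc j e]
  ring

lemma cdd (a : ℕ → ℚ) (c : ℕ → ℕ → ℚ)
    (hc : ∀ j d, c j d = ∑ k ∈ Finset.Icc j d,
      ((d - j).choose (d - k) : ℚ) * a k / 2 ^ k)
    (d : ℕ) : c d d = a d / 2 ^ d := by
  rw [hc]; simp

lemma telesc (a : ℕ → ℚ) (c : ℕ → ℕ → ℚ)
    (hc : ∀ j d, c j d = ∑ k ∈ Finset.Icc j d,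
      ((d - j).choose (d - k) : ℚ) * a k / 2 ^ k)
    (e : ℕ) : ∀ t, t ≤ e + 1 →
    c (e + 1 - t) (e+1) = c (e+1) (e+1) + ∑ i ∈ Finset.Ico (e+1-t) (e+1), c i e := by
  intro t
  induction t with
  | zero => simp
  | succ t ih =>
    intro ht
    have ht' : t ≤ e + 1 := by omega
    have hins : Finset.Ico (e - t) (e+1) = insert (e - t) (Finset.Ico (e+1-t) (e+1)) := by
      ext x; simp only [Finset.mem_insert, Finset.mem_Ico]; omega
    have hj : e + 1 - (t+1) = e - t := by omega
    rw [hj, hins, Finset.sum_insert (by simp only [Finset.mem_Ico]; omega)]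
    have hp := pascalc a c hc (e - t) e (by omega)
    have h5 : e - t + 1 = e + 1 - t := by omega
    rw [h5] at hp
    rw [hp, ih ht']
    ring

lemma telesc' (a : ℕ → ℚ) (c : ℕ → ℕ → ℚ)
    (hc : ∀ j d, c j d = ∑ k ∈ Finset.Icc j d,
      ((d - j).choose (d - k) : ℚ) * a k / 2 ^ k)
    (e j : ℕ) (hj : j ≤ e + 1) :
    c j (e+1) = c (e+1) (e+1) + ∑ i ∈ Finset.Ico j (e+1), c i e := by
  have h6 := telesc a c hc e (e + 1 - j) (by omega)
  have h2 : e + 1 - (e + 1 - j) = j := by omega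
  rwa [h2] at h6

lemma p3 (a : ℕ → ℚ) (c : ℕ → ℕ → ℚ)
    (hrec : ∀ n, 3 ≤ n →
      2 * a n = -∑ k ∈ Finset.range n, a k * (n.choose k : ℚ) * 2 ^ (n - k))
    (hc : ∀ j d, c j d = ∑ k ∈ Finset.Icc j d,
      ((d - j).choose (d - k) : ℚ) * a k / 2 ^ k)
    (d : ℕ) (hd : 3 ≤ d) : c 0 d = -(a d / 2 ^ d) := by
  have hIcc : Finset.Icc 0 d = Finset.range (d+1) := by
    ext x; simp only [Finset.mem_Icc, Finset.mem_range]; omega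
  have hsum : ∀ k ∈ Finset.range d, a k * (d.choose k : ℚ) * 2 ^ (d - k)
      = 2 ^ d * ((d.choose (d - k) : ℚ) * a k / 2 ^ k) := by
    intro k hk
    simp only [Finset.mem_range] at hk
    rw [Nat.choose_symm (by omega)]
    have : (2:ℚ) ^ d = 2 ^ k * 2 ^ (d - k) := by
      rw [← pow_add]; congr 1; omega
    rw [this]
    field_simp
  have h7 := hrec d hd
  rw [Finset.sum_congr rfl hsum, ← Finset.mul_sum] at h7
  have h8 : ∑ k ∈ Finset.range d, ((d.choose (d - k) : ℚ) * a k / 2 ^ k)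
      = -2 * a d / 2 ^ d := by
    have h2d : (0:ℚ) < 2 ^ d := by positivity
    field_simp at h7 ⊢
    linarith
  rw [hc, hIcc]
  simp only [Nat.sub_zero]
  rw [Finset.sum_range_succ, h8]
  simp
  ring

lemma masterF (a : ℕ → ℚ) (c : ℕ → ℕ → ℚ)
    (hrec : ∀ n, 3 ≤ n →
      2 * a n = -∑ k ∈ Finset.range n, a k * (n.choose k : ℚ) * 2 ^ (n - k))
    (hc : ∀ j d, c j d = ∑ k ∈ Finset.Icc j d,
      ((d - j).choose (d - k) : ℚ) * a k / 2 ^ k)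
    (e j : ℕ) (he : 2 ≤ e) (hj : j ≤ e + 1) :
    2 * c j (e+1) = ∑ i ∈ Finset.Ico j (e+1), c i e - ∑ i ∈ Finset.Ico 0 j, c i e := by
  have h0 := telesc' a c hc e 0 (by omega)
  have hj' := telesc' a c hc e j hj
  have htop : c 0 (e+1) = -c (e+1) (e+1) := by
    rw [p3 a c hrec hc (e+1) (by omega), cdd a c hc (e+1)]
  have hsplit : ∑ i ∈ Finset.Ico 0 j, c i e + ∑ i ∈ Finset.Ico j (e+1), c i e
      = ∑ i ∈ Finset.Ico 0 (e+1), c i e :=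
    Finset.sum_Ico_consecutive _ (by omega) (by omega)
  linarith

theorem stmt_3 (A : ℚ) (hA : A ≤ 0) (a : ℕ → ℚ)
    (h0 : a 0 = 1) (h1 : a 1 = -1) (h2 : a 2 = A)
    (hrec : ∀ n, 3 ≤ n →
      2 * a n = -∑ k ∈ Finset.range n, a k * (n.choose k : ℚ) * 2 ^ (n - k))
    (c : ℕ → ℕ → ℚ)
    (hc : ∀ j d, c j d = ∑ k ∈ Finset.Icc j d,
      ((d - j).choose (d - k) : ℚ) * a k / 2 ^ k) :
    ∀ m, 1 ≤ m →
      (∀ j, j ≤ 4 * m → 0 ≤ c j (4 * m)) ∧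
      (∀ j, j ≤ 4 * m + 2 → c j (4 * m + 2) ≤ 0) := by
  -- base column d = 4
  have h3 : a 3 = 2 - 3 * A := by
    have := hrec 3 (by norm_num)
    simp [Finset.sum_range_succ, h0, h1, h2, Nat.choose] at this
    linarith
  have h4 : a 4 = 0 := by
    have := hrec 4 (by norm_num)
    simp [Finset.sum_range_succ, h0, h1, h2, h3, Nat.choose] at this
    linarith
  have e0 : Finset.Icc (0:ℕ) 4 = {0,1,2,3,4} := by decide
  have e1 : Finset.Icc (1:ℕ) 4 = {1,2,3,4} := by decide
  have e2 : Finset.Icc (2:ℕ) 4 = {2,3,4} := by decide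
  have e3 : Finset.Icc (3:ℕ) 4 = {3,4} := by decide
  have e4 : Finset.Icc (4:ℕ) 4 = {4} := by decide
  have c0 : c 0 4 = 0 := by
    rw [hc, e0]; norm_num [h0, h1, h2, h3, h4, Nat.choose]; ring
  have c1 : c 1 4 = 1/4 - 3*A/8 := by
    rw [hc, e1]; norm_num [h1, h2, h3, h4, Nat.choose]; ring
  have c2 : c 2 4 = 1/2 - A/2 := by
    rw [hc, e2]; norm_num [h2, h3, h4, Nat.choose]; ring
  have c3 : c 3 4 = 1/4 - 3*A/8 := by
    rw [hc, e3]; norm_num [h3, h4, Nat.choose]; ring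
  have c4 : c 4 4 = 0 := by
    rw [hc, e4]; norm_num [h4]
  -- main induction on even columns
  have key : ∀ r, 2 ≤ r →
      (∀ j, j ≤ 2*r → 0 ≤ (-1:ℚ)^r * c j (2*r)) ∧
      (∀ j, j ≤ 2*r → c j (2*r) = c (2*r - j) (2*r)) := by
    intro r hr
    induction r, hr using Nat.le_induction with
    | base =>
      constructor
      · intro j hj
        interval_cases j <;> simp [c0, c1, c2, c3, c4] <;> linarith
      · intro j hj
        interval_cases j <;> simp [c0, c1, c2, c3, c4]
    | succ r hr ih =>
      obtain ⟨Hpos, Hsym⟩ := ih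
      -- reflection for the symmetric even column 2r
      have refl_u : ∀ p q, q ≤ 2*r + 1 →
          ∑ i ∈ Finset.Ico p q, c i (2*r) = ∑ i ∈ Finset.Ico (2*r+1-q) (2*r+1-p), c i (2*r) := by
        intro p q hq
        have hrefl := reflectGen (fun i => c i (2*r)) (2*r) p q hq
        rw [← hrefl]
        exact Finset.sum_congr rfl (fun i hi => by
          simp only [Finset.mem_Ico] at hi
          exact Hsym i (by omega))
      -- odd column facts
      have F1 : ∀ j, j ≤ 2*r+1 →
          2 * c j (2*r+1) = ∑ i ∈ Finset.Ico j (2*r+1), c i (2*r) - ∑ i ∈ Finset.Ico 0 j, c i (2*r) :=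
        fun j hj => masterF a c hrec hc (2*r) j (by omega) hj
      have OA : ∀ j, j ≤ 2*r+1 → c j (2*r+1) = -c (2*r+1-j) (2*r+1) := by
        intro j hj
        have hF := F1 j hj
        have hF' := F1 (2*r+1-j) (by omega)
        have r1 : ∑ i ∈ Finset.Ico (2*r+1-j) (2*r+1), c i (2*r) = ∑ i ∈ Finset.Ico 0 j, c i (2*r) := by
          have := refl_u (2*r+1-j) (2*r+1) (by omega)
          rw [show 2*r+1-(2*r+1) = 0 by omega, show 2*r+1-(2*r+1-j) = j by omega] at this
          exact this
        have r2 : ∑ i ∈ Finset.Ico 0 (2*r+1-j), c i (2*r) = ∑ i ∈ Finset.Ico j (2*r+1), c i (2*r) := by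
          have := refl_u 0 (2*r+1-j) (by omega)
          rw [show 2*r+1-(2*r+1-j) = j by omega, show 2*r+1-0 = 2*r+1 by omega] at this
          exact this
        rw [r1, r2] at hF'
        linarith
      have OB : ∀ j, j ≤ r → 0 ≤ (-1:ℚ)^r * c j (2*r+1) := by
        intro j hj
        have hF := F1 j (by omega)
        have hsplit : ∑ i ∈ Finset.Ico j (2*r+1-j), c i (2*r)
            + ∑ i ∈ Finset.Ico (2*r+1-j) (2*r+1), c i (2*r)
            = ∑ i ∈ Finset.Ico j (2*r+1), c i (2*r) :=
          Finset.sum_Ico_consecutive _ (by omega) (by omega)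
        have r1 : ∑ i ∈ Finset.Ico (2*r+1-j) (2*r+1), c i (2*r) = ∑ i ∈ Finset.Ico 0 j, c i (2*r) := by
          have := refl_u (2*r+1-j) (2*r+1) (by omega)
          rw [show 2*r+1-(2*r+1) = 0 by omega, show 2*r+1-(2*r+1-j) = j by omega] at this
          exact this
        have hs : (0:ℚ) ≤ ∑ i ∈ Finset.Ico j (2*r+1-j), (-1:ℚ)^r * c i (2*r) := by
          apply Finset.sum_nonneg
          intro i hi
          simp only [Finset.mem_Ico] at hi
          exact Hpos i (by omega)
        rw [← Finset.mul_sum] at hs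
        have h9 : (2:ℚ) * c j (2*r+1) = ∑ i ∈ Finset.Ico j (2*r+1-j), c i (2*r) := by linarith
        have h10 : (0:ℚ) ≤ (-1:ℚ)^r * (2 * c j (2*r+1)) := by rw [h9]; exact hs
        nlinarith [h10]
      have OC : ∀ j, r+1 ≤ j → j ≤ 2*r+1 → (-1:ℚ)^r * c j (2*r+1) ≤ 0 := by
        intro j hj1 hj2
        have hF := F1 j hj2
        have hsplit : ∑ i ∈ Finset.Ico 0 (2*r+1-j), c i (2*r)
            + ∑ i ∈ Finset.Ico (2*r+1-j) j, c i (2*r)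
            = ∑ i ∈ Finset.Ico 0 j, c i (2*r) :=
          Finset.sum_Ico_consecutive _ (by omega) (by omega)
        have r1 : ∑ i ∈ Finset.Ico 0 (2*r+1-j), c i (2*r) = ∑ i ∈ Finset.Ico j (2*r+1), c i (2*r) := by
          have := refl_u 0 (2*r+1-j) (by omega)
          rw [show 2*r+1-(2*r+1-j) = j by omega, show 2*r+1-0 = 2*r+1 by omega] at this
          exact this
        have hs : (0:ℚ) ≤ ∑ i ∈ Finset.Ico (2*r+1-j) j, (-1:ℚ)^r * c i (2*r) := by
          apply Finset.sum_nonneg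
          intro i hi
          simp only [Finset.mem_Ico] at hi
          exact Hpos i (by omega)
        rw [← Finset.mul_sum] at hs
        have h9 : (2:ℚ) * c j (2*r+1) = -∑ i ∈ Finset.Ico (2*r+1-j) j, c i (2*r) := by linarith
        have h10 : (-1:ℚ)^r * (2 * c j (2*r+1)) ≤ 0 := by rw [h9]; linarith [hs]
        nlinarith [h10]
      -- zero sum of odd column
      have ZS : ∑ i ∈ Finset.Ico 0 (2*r+2), c i (2*r+1) = 0 := by
        have hrefl := reflectGen (fun i => c i (2*r+1)) (2*r+1) 0 (2*r+2) (by omega)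
        rw [show 2*r+1+1-(2*r+2) = 0 by omega, show 2*r+1+1-0 = 2*r+2 by omega] at hrefl
        have hneg : ∑ i ∈ Finset.Ico 0 (2*r+2), c (2*r+1-i) (2*r+1)
            = ∑ i ∈ Finset.Ico 0 (2*r+2), -c i (2*r+1) := by
          apply Finset.sum_congr rfl
          intro i hi
          simp only [Finset.mem_Ico] at hi
          have := OA i (by omega)
          linarith
        rw [hneg, Finset.sum_neg_distrib] at hrefl
        linarith
      -- even column 2r+2
      have F2 : ∀ j, j ≤ 2*r+2 →
          c j (2*r+2) = -∑ i ∈ Finset.Ico 0 j, c i (2*r+1) ∧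
          c j (2*r+2) = ∑ i ∈ Finset.Ico j (2*r+2), c i (2*r+1) := by
        intro j hj
        have hF := masterF a c hrec hc (2*r+1) j (by omega) hj
        have hsplit : ∑ i ∈ Finset.Ico 0 j, c i (2*r+1)
            + ∑ i ∈ Finset.Ico j (2*r+2), c i (2*r+1)
            = ∑ i ∈ Finset.Ico 0 (2*r+2), c i (2*r+1) :=
          Finset.sum_Ico_consecutive _ (by omega) (by omega)
        rw [ZS] at hsplit
        constructor <;> linarith
      have Epos : ∀ j, j ≤ 2*r+2 → 0 ≤ (-1:ℚ)^(r+1) * c j (2*r+2) := by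
        intro j hj
        have hpow : ((-1:ℚ))^(r+1) = -((-1:ℚ)^r) := by
          rw [pow_succ]; ring
        rcases le_or_gt j (r+1) with hcase | hcase
        · have hL := (F2 j hj).1
          have hs : (0:ℚ) ≤ ∑ i ∈ Finset.Ico 0 j, (-1:ℚ)^r * c i (2*r+1) := by
            apply Finset.sum_nonneg
            intro i hi
            simp only [Finset.mem_Ico] at hi
            exact OB i (by omega)
          rw [← Finset.mul_sum] at hs
          rw [hpow, hL]
          nlinarith [hs]
        · have hR := (F2 j hj).2
          have hs : ∑ i ∈ Finset.Ico j (2*r+2), (-1:ℚ)^r * c i (2*r+1) ≤ 0 := by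
            apply Finset.sum_nonpos
            intro i hi
            simp only [Finset.mem_Ico] at hi
            exact OC i (by omega) (by omega)
          rw [← Finset.mul_sum] at hs
          rw [hpow, hR]
          nlinarith [hs]
      have Esym : ∀ j, j ≤ 2*r+2 → c j (2*r+2) = c (2*r+2-j) (2*r+2) := by
        intro j hj
        have hL := (F2 j hj).1
        have hR := (F2 (2*r+2-j) (by omega)).2
        have hrefl := reflectGen (fun i => c i (2*r+1)) (2*r+1) 0 j (by omega)
        rw [show 2*r+1+1-j = 2*r+2-j by omega, show 2*r+1+1-0 = 2*r+2 by omega] at hrefl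
        have hneg : ∑ i ∈ Finset.Ico 0 j, c (2*r+1-i) (2*r+1)
            = ∑ i ∈ Finset.Ico 0 j, -c i (2*r+1) := by
          apply Finset.sum_congr rfl
          intro i hi
          simp only [Finset.mem_Ico] at hi
          have := OA i (by omega)
          linarith
        rw [hneg, Finset.sum_neg_distrib] at hrefl
        rw [hL, hR, ← hrefl]
      constructor
      · intro j hj
        have := Epos j (by omega)
        rwa [show 2*(r+1) = 2*r+2 by ring]
      · intro j hj
        have := Esym j (by omega)
        rw [show 2*(r+1) = 2*r+2 by ring]
        exact this
  -- conclude
  intro m hm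
  constructor
  · intro j hj
    have hk := (key (2*m) (by omega)).1 j (by omega)
    have hpow : ((-1:ℚ))^(2*m) = 1 := by
      rw [pow_mul]; norm_num
    rw [hpow, one_mul] at hk
    rwa [show 4*m = 2*(2*m) by ring]
  · intro j hj
    have hk := (key (2*m+1) (by omega)).1 j (by omega)
    have hpow : ((-1:ℚ))^(2*m+1) = -1 := by
      rw [pow_succ, pow_mul]; norm_num
    rw [hpow] at hk
    have : c j (2*(2*m+1)) ≤ 0 := by linarith
    rwa [show 2*(2*m+1) = 4*m+2 by ring] at this
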